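/- Let h ≥ 0 and r ≥ 0 be integers and m_1, …, m_r integers with m_i ≥ 2 for all i. If 0 < μ(h; m_1,…,m_r) < 1/4, then h = 0 and either r = 3, or r = 4 and the multiset {m_1, m_2, m_3, m_4} equals {2, 2, 2, 3} (in which case μ = 1/6). -/

import Mathlib

/-- The signature measure `μ(h; m₁,…,m_r) = 2h - 2 + ∑ᵢ (1 - 1/mᵢ)`. -/
def mu (h r : ℕ) (m : Fin r → ℕ) : ℚ :=
  2 * h - 2 + ∑ i, (1 - ((m i : ℚ))⁻¹)

/-- If `0 < μ(h; m₁,…,m_r) < 1/4`, then `h = 0` and either `r = 3`, or `r = 4`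
and the multiset of periods is `{2,2,2,3}`, in which case `μ = 1/6`. -/
theorem mu_lt_quarter (h r : ℕ) (m : Fin r → ℕ)
    (hm : ∀ i, 2 ≤ m i) (h0 : 0 < mu h r m) (h1 : mu h r m < 1 / 4) :
    h = 0 ∧ (r = 3 ∨ (r = 4 ∧
      Multiset.map m Finset.univ.val = ({2, 2, 2, 3} : Multiset ℕ) ∧
      mu h r m = 1 / 6)) := by
  have hpos : ∀ i, (0:ℚ) < (m i : ℚ) := fun i => by
    have := hm i; positivity
  have hinv2 : ∀ i, ((m i : ℚ))⁻¹ ≤ 1/2 := fun i => by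
    rw [inv_le_comm₀ (hpos i) (by norm_num), show ((1:ℚ)/2)⁻¹ = 2 by norm_num]
    exact_mod_cast hm i
  have hinvpos : ∀ i, (0:ℚ) < ((m i : ℚ))⁻¹ := fun i => inv_pos.mpr (hpos i)
  -- sum bounds
  have hS1 : (r : ℚ) * (1/2) ≤ ∑ i, (1 - ((m i : ℚ))⁻¹) := by
    calc (r : ℚ) * (1/2) = ∑ _i : Fin r, (1/2 : ℚ) := by
          simp [Finset.sum_const, mul_comm]
      _ ≤ _ := Finset.sum_le_sum fun i _ => by linarith [hinv2 i]
  have hS2 : ∑ i, (1 - ((m i : ℚ))⁻¹) ≤ (r : ℚ) := by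
    calc ∑ i, (1 - ((m i : ℚ))⁻¹) ≤ ∑ _i : Fin r, (1:ℚ) :=
          Finset.sum_le_sum fun i _ => by linarith [hinvpos i]
      _ = r := by simp
  have hmu : mu h r m = 2 * h - 2 + ∑ i, (1 - ((m i : ℚ))⁻¹) := rfl
  have hA : (8:ℚ) * h + 2 * r < 9 := by rw [hmu] at h1; linarith
  have hB : (2:ℚ) < 2 * h + r := by rw [hmu] at h0; linarith
  have hA' : 8 * h + 2 * r < 9 := by exact_mod_cast hA
  have hB' : 2 < 2 * h + r := by exact_mod_cast hB
  have hh : h = 0 := by omega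
  subst hh
  have hr : r = 3 ∨ r = 4 := by omega
  refine ⟨rfl, ?_⟩
  rcases hr with hr | hr
  · exact Or.inl hr
  · subst hr
    refine Or.inr ⟨rfl, ?_⟩
    rw [hmu, Fin.sum_univ_four] at h0 h1
    -- bound each period by 3
    have hle : ∀ i : Fin 4, m i ≤ 3 := by
      intro i
      by_contra hc
      push_neg at hc
      have h4 : ((m i : ℚ))⁻¹ ≤ 1/4 := by
        rw [inv_le_comm₀ (hpos i) (by norm_num), show ((1:ℚ)/4)⁻¹ = 4 by norm_num]
        exact_mod_cast hc
      fin_cases i <;> simp_all <;>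
        linarith [hinv2 0, hinv2 1, hinv2 2, hinv2 3]
    have huniv : Multiset.map m Finset.univ.val = {m 0, m 1, m 2, m 3} := by
      have : (Finset.univ.val : Multiset (Fin 4)) = {0, 1, 2, 3} := by decide
      rw [this]; rfl
    set a := m 0 with ha
    set b := m 1 with hb
    set c := m 2 with hc
    set d := m 3 with hd
    have ha2 : 2 ≤ a := hm 0
    have hb2 : 2 ≤ b := hm 1
    have hc2 : 2 ≤ c := hm 2
    have hd2 : 2 ≤ d := hm 3
    have ha3 : a ≤ 3 := hle 0
    have hb3 : b ≤ 3 := hle 1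
    have hc3 : c ≤ 3 := hle 2
    have hd3 : d ≤ 3 := hle 3
    rw [huniv]
    rw [hmu, Fin.sum_univ_four, ← ha, ← hb, ← hc, ← hd]
    interval_cases a <;> interval_cases b <;> interval_cases c <;>
      interval_cases d <;> norm_num at h0 <;> norm_num at h1 <;> norm_num <;> decide
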